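/- The gradient of the scaled negative relative entropy $\zeta(\theta) = \frac{\lambda}{|\mathcal{S}||\mathcal{A}|}\sum_{s,a}\log\pi_\theta(a|s)$ under the softmax parameterization has Euclidean norm bounded by $\lambda(\frac{1}{\sqrt{|\mathcal{A}|}}+1)$; specifically, $\nabla_{\theta_s}\zeta(\theta) = \frac{\lambda}{|\mathcal{S}|}(\frac{1}{|\mathcal{A}|}\mathbf{1} - \pi_\theta(\cdot|s))$ and $\|\nabla_\theta \zeta(\theta)\| \le \lambda(\frac{1}{\sqrt{|\mathcal{A}|}}+1)$. -/

import Mathlib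

/-- Softmax policy parameterization. -/
noncomputable def softmax {S A : Type*} [Fintype A] (θ : S → A → ℝ) (s : S) (a : A) : ℝ :=
  Real.exp (θ s a) / ∑ a' : A, Real.exp (θ s a')

/-- Scaled negative relative entropy `ζ(θ) = λ/(|S||A|) ∑_{s,a} log π_θ(a|s)`. -/
noncomputable def zeta {S A : Type*} [Fintype S] [Fintype A] (lam : ℝ) (θ : S → A → ℝ) : ℝ :=
  lam / ((Fintype.card S : ℝ) * (Fintype.card A : ℝ)) *
    ∑ s : S, ∑ a : A, Real.log (softmax θ s a)

lemma softmax_nonneg {S A : Type*} [Fintype A] (θ : S → A → ℝ) (s : S) (a : A) :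
    0 ≤ softmax θ s a :=
  div_nonneg (Real.exp_pos _).le (Finset.sum_nonneg fun _ _ => (Real.exp_pos _).le)

lemma softmax_le_one {S A : Type*} [Fintype A] (θ : S → A → ℝ) (s : S) (a : A) :
    softmax θ s a ≤ 1 := by
  have hpos : (0:ℝ) < ∑ a' : A, Real.exp (θ s a') :=
    Finset.sum_pos (fun i _ => Real.exp_pos _) ⟨a, Finset.mem_univ a⟩
  rw [softmax, div_le_one hpos]
  exact Finset.single_le_sum (fun i _ => (Real.exp_pos (θ s i)).le) (Finset.mem_univ a)

lemma sum_softmax {S A : Type*} [Fintype A] [Nonempty A] (θ : S → A → ℝ) (s : S) :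
    ∑ a : A, softmax θ s a = 1 := by
  have hpos : (0:ℝ) < ∑ a' : A, Real.exp (θ s a') :=
    Finset.sum_pos (fun i _ => Real.exp_pos _) Finset.univ_nonempty
  simp only [softmax]
  rw [← Finset.sum_div, div_self hpos.ne']

/-- The gradient of `ζ` satisfies `∂ζ/∂θ_{s,a} = λ/|S| (1/|A| - π_θ(a|s))`, and its
Euclidean norm is bounded by `λ (1/√|A| + 1)`. -/
theorem stmt_12 {S A : Type*} [Fintype S] [Fintype A] [DecidableEq S] [DecidableEq A]
    (lam : ℝ) (hlam : 0 < lam) (θ : S → A → ℝ) :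
    (∀ (s : S) (a : A),
      HasDerivAt
        (fun t : ℝ => zeta lam (fun s'' a'' => θ s'' a'' + if s'' = s ∧ a'' = a then t else 0))
        (lam / (Fintype.card S : ℝ) * (1 / (Fintype.card A : ℝ) - softmax θ s a)) 0) ∧
    Real.sqrt (∑ s : S, ∑ a : A,
        (lam / (Fintype.card S : ℝ) * (1 / (Fintype.card A : ℝ) - softmax θ s a)) ^ 2)
      ≤ lam * (1 / Real.sqrt (Fintype.card A : ℝ) + 1) := by
  constructor
  · intro s a
    haveI : Nonempty A := ⟨a⟩
    haveI : Nonempty S := ⟨s⟩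
    have hcA : (Fintype.card A : ℝ) ≠ 0 := Nat.cast_ne_zero.mpr Fintype.card_ne_zero
    have hcS : (Fintype.card S : ℝ) ≠ 0 := Nat.cast_ne_zero.mpr Fintype.card_ne_zero
    set C : ℝ := lam / ((Fintype.card S : ℝ) * (Fintype.card A : ℝ)) with hCdef
    set Z : ℝ → ℝ := fun t => ∑ a' : A, Real.exp (θ s a' + if a' = a then t else 0) with hZdef
    have hZpos : ∀ t, 0 < Z t := fun t =>
      Finset.sum_pos (fun i _ => Real.exp_pos _) Finset.univ_nonempty
    set D : ℝ := ∑ s' ∈ Finset.univ.erase s, ∑ a' : A, Real.log (softmax θ s' a') with hDdef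
    set E : ℝ := ∑ a' : A, θ s a' with hEdef
    have key : (fun t : ℝ =>
        zeta lam (fun s'' a'' => θ s'' a'' + if s'' = s ∧ a'' = a then t else 0))
        = fun t : ℝ => C * (D + (E + t - (Fintype.card A : ℝ) * Real.log (Z t))) := by
      funext t
      rw [zeta]
      congr 1
      rw [← Finset.add_sum_erase Finset.univ _ (Finset.mem_univ s), add_comm]
      congr 1
      · rw [hDdef]
        apply Finset.sum_congr rfl
        intro s' hs'
        have hne : s' ≠ s := (Finset.mem_erase.mp hs').1
        apply Finset.sum_congr rfl
        intro a' _
        congr 1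
        rw [softmax, softmax]
        simp [hne]
      · have hterm : ∀ a' : A,
            Real.log (softmax (fun s'' a'' => θ s'' a'' + if s'' = s ∧ a'' = a then t else 0) s a')
            = θ s a' + (if a' = a then t else 0) - Real.log (Z t) := by
          intro a'
          simp only [softmax, true_and]
          rw [show (∑ a'' : A, Real.exp (θ s a'' + if a'' = a then t else 0)) = Z t from rfl,
            Real.log_div (Real.exp_ne_zero _) (hZpos t).ne', Real.log_exp]
        rw [Finset.sum_congr rfl (fun a' _ => hterm a')]
        rw [Finset.sum_sub_distrib, Finset.sum_add_distrib, Finset.sum_const,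
          Finset.card_univ, nsmul_eq_mul, Finset.sum_ite_eq' Finset.univ a (fun _ => t)]
        simp [hEdef]
    rw [key]
    have hZd : HasDerivAt Z (Real.exp (θ s a)) 0 := by
      have h : ∀ a' ∈ Finset.univ, HasDerivAt
          (fun t : ℝ => Real.exp (θ s a' + if a' = a then t else 0))
          (if a' = a then Real.exp (θ s a) else 0) 0 := by
        intro a' _
        by_cases h : a' = a
        · subst h
          simp only [if_pos rfl]
          have := ((hasDerivAt_id (0:ℝ)).const_add (θ s a')).exp
          simpa using this
        · simp only [if_neg h]
          exact hasDerivAt_const 0 _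
      have := HasDerivAt.fun_sum h
      simpa [Finset.sum_ite_eq'] using this
    have hlog : HasDerivAt (fun t => Real.log (Z t)) (Real.exp (θ s a) / Z 0) 0 :=
      hZd.log (hZpos 0).ne'
    have hmain : HasDerivAt
        (fun t : ℝ => C * (D + (E + t - (Fintype.card A : ℝ) * Real.log (Z t))))
        (C * (1 - (Fintype.card A : ℝ) * (Real.exp (θ s a) / Z 0))) 0 := by
      have := ((((hasDerivAt_id (0:ℝ)).const_add E).sub
        (hlog.const_mul ((Fintype.card A : ℝ)))).const_add D).const_mul C
      simpa using this
    convert hmain using 1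
    have hZ0 : Z 0 = ∑ a' : A, Real.exp (θ s a') := by
      rw [hZdef]; apply Finset.sum_congr rfl; intro a'' _; simp
    rw [hZ0, hCdef,
      show Real.exp (θ s a) / ∑ a' : A, Real.exp (θ s a') = softmax θ s a from rfl]
    generalize softmax θ s a = p
    field_simp
  · set cA : ℝ := (Fintype.card A : ℝ) with hcAdef
    set cS : ℝ := (Fintype.card S : ℝ) with hcSdef
    have hcA0 : 0 ≤ cA := Nat.cast_nonneg _
    have hcS0 : 0 ≤ cS := Nat.cast_nonneg _
    have hB : 0 ≤ lam * (1 / Real.sqrt cA + 1) := by positivity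
    rw [show lam * (1 / Real.sqrt cA + 1)
        = Real.sqrt ((lam * (1 / Real.sqrt cA + 1))^2) from (Real.sqrt_sq hB).symm]
    apply Real.sqrt_le_sqrt
    have hBsq : lam ^ 2 * (1 / cA + 1) ≤ (lam * (1 / Real.sqrt cA + 1)) ^ 2 := by
      have hs : (1 / Real.sqrt cA) ^ 2 = 1 / cA := by
        rw [div_pow, one_pow, Real.sq_sqrt hcA0]
      have hx : (0:ℝ) ≤ 1 / Real.sqrt cA := by positivity
      nlinarith [mul_nonneg (sq_nonneg lam) hx]
    refine le_trans ?_ hBsq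
    -- bound the double sum
    have hinner : ∀ s : S, ∑ a : A, (1 / cA - softmax θ s a) ^ 2 ≤ 1 / cA + 1 := by
      intro s
      rcases isEmpty_or_nonempty A with hA | hA
      · simp [Finset.univ_eq_empty]
        positivity
      · have h1 : ∑ a : A, (1 / cA - softmax θ s a) ^ 2
            ≤ ∑ a : A, ((1 / cA) ^ 2 + (softmax θ s a) ^ 2) := by
          apply Finset.sum_le_sum
          intro a _
          have h0 := softmax_nonneg θ s a
          have h2 : (0:ℝ) ≤ 1 / cA := by positivity
          nlinarith [mul_nonneg h2 h0]
        have h2 : ∑ a : A, ((1 / cA) ^ 2 + (softmax θ s a) ^ 2)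
            = cA * (1 / cA) ^ 2 + ∑ a : A, (softmax θ s a) ^ 2 := by
          rw [Finset.sum_add_distrib, Finset.sum_const, Finset.card_univ, nsmul_eq_mul]
        have h3 : ∑ a : A, (softmax θ s a) ^ 2 ≤ 1 := by
          calc ∑ a : A, (softmax θ s a) ^ 2 ≤ ∑ a : A, softmax θ s a := by
                apply Finset.sum_le_sum
                intro a _
                nlinarith [softmax_nonneg θ s a, softmax_le_one θ s a]
            _ = 1 := sum_softmax θ s
        have hcApos : 0 < cA := by
          rw [hcAdef]; exact_mod_cast Fintype.card_pos
        have h4 : cA * (1 / cA) ^ 2 = 1 / cA := by field_simp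
        linarith
    rcases isEmpty_or_nonempty S with hS | hS
    · simp [Finset.univ_eq_empty]
      positivity
    · have hcSpos : 0 < cS := by rw [hcSdef]; exact_mod_cast Fintype.card_pos
      have hstep : ∀ s : S, ∑ a : A, (lam / cS * (1 / cA - softmax θ s a)) ^ 2
          ≤ (lam / cS) ^ 2 * (1 / cA + 1) := by
        intro s
        have : ∑ a : A, (lam / cS * (1 / cA - softmax θ s a)) ^ 2
            = (lam / cS) ^ 2 * ∑ a : A, (1 / cA - softmax θ s a) ^ 2 := by
          rw [Finset.mul_sum]
          apply Finset.sum_congr rfl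
          intro a _
          ring
        rw [this]
        have h5 : (0:ℝ) ≤ (lam / cS)^2 := sq_nonneg _
        exact mul_le_mul_of_nonneg_left (hinner s) h5
      calc ∑ s : S, ∑ a : A, (lam / cS * (1 / cA - softmax θ s a)) ^ 2
          ≤ ∑ s : S, (lam / cS) ^ 2 * (1 / cA + 1) :=
            Finset.sum_le_sum fun s _ => hstep s
        _ = cS * ((lam / cS) ^ 2 * (1 / cA + 1)) := by
            rw [Finset.sum_const, Finset.card_univ, nsmul_eq_mul]
        _ = lam ^ 2 / cS * (1 / cA + 1) := by
            rw [← mul_assoc,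
              show cS * (lam / cS) ^ 2 = lam ^ 2 / cS by
                rw [div_pow, sq cS, ← div_div, mul_comm, div_mul_cancel₀ _ hcSpos.ne']]
        _ ≤ lam ^ 2 * (1 / cA + 1) := by
            have h6 : lam ^ 2 / cS ≤ lam ^ 2 := by
              rw [div_le_iff₀ hcSpos]
              nlinarith [sq_nonneg lam, show (1:ℝ) ≤ cS from Nat.one_le_cast.mpr Fintype.card_pos]
            have h7 : (0:ℝ) ≤ 1 / cA + 1 := by positivity
            exact mul_le_mul_of_nonneg_right h6 h7
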